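/- Let H be a real Hilbert space, A : H → H a continuous linear map, b ∈ H, and α > 0. If ν minimizes ½‖Aν − b‖² + α·N(ν) over H for a norm-like convex function N, and r = b − Aν is the residual, then r solves the dual problem: r maximizes ⟨r̃, b⟩ − ½‖r̃‖² subject to N*(A*r̃) ≤ α being satisfied (i.e., A*r̃ lies in the polar constraint set), where N* denotes the support/indicator structure of the conjugate of αN. -/

import Mathlib

open scoped RealInnerProductSpace

private lemma aux_le (x K : ℝ) (h : ∀ s : ℝ, 0 < s → s < 1 → x ≤ s * K) : x ≤ 0 := by
  by_contra hx
  push_neg at hx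
  set s : ℝ := min (x / (2 * (|K| + 1))) (1/2) with hs
  have hs0 : 0 < s := lt_min (by positivity) (by norm_num)
  have hs1 : s < 1 := lt_of_le_of_lt (min_le_right _ _) (by norm_num)
  have h1 := h s hs0 hs1
  have h2 : s ≤ x / (2 * (|K| + 1)) := min_le_left _ _
  have h3 : K ≤ |K| := le_abs_self K
  have h4 : (0:ℝ) ≤ |K| := abs_nonneg K
  have h5 : s * K ≤ s * |K| := mul_le_mul_of_nonneg_left h3 hs0.le
  have h6 : s * |K| ≤ (x / (2 * (|K| + 1))) * |K| := mul_le_mul_of_nonneg_right h2 h4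
  have h7 : (x / (2 * (|K| + 1))) * |K| < x := by
    rw [div_mul_eq_mul_div, div_lt_iff₀ (by positivity)]
    nlinarith
  linarith

set_option maxHeartbeats 1000000 in
/-- LASSO duality on H = ℝⁿ: if ν minimizes ½‖Aν − b‖² + α‖ν‖₁, then the residual
r = b − Aν is feasible for the dual problem (‖A*r‖_∞ ≤ α) and maximizes
⟨r̃, b⟩ − ½‖r̃‖² over all dual-feasible r̃. -/
theorem lasso_dual_residual
    {n : ℕ} (A : EuclideanSpace ℝ (Fin n) →L[ℝ] EuclideanSpace ℝ (Fin n))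
    (b : EuclideanSpace ℝ (Fin n)) (α : ℝ) (hα : 0 < α)
    (ν : EuclideanSpace ℝ (Fin n))
    (hmin : ∀ w : EuclideanSpace ℝ (Fin n),
      (1/2) * ‖A ν - b‖^2 + α * ∑ i, |ν i|
        ≤ (1/2) * ‖A w - b‖^2 + α * ∑ i, |w i|) :
    (∀ i, |ContinuousLinearMap.adjoint A (b - A ν) i| ≤ α) ∧
    ∀ r : EuclideanSpace ℝ (Fin n),
      (∀ i, |ContinuousLinearMap.adjoint A r i| ≤ α) →
        ⟪r, b⟫ - (1/2) * ‖r‖^2 ≤ ⟪b - A ν, b⟫ - (1/2) * ‖b - A ν‖^2 := by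
  set r₀ : EuclideanSpace ℝ (Fin n) := b - A ν with hr₀
  set S : ℝ := ∑ i, |ν i| with hS
  have key : ∀ w : EuclideanSpace ℝ (Fin n),
      0 ≤ (1/2) * ‖A w - b‖^2 - (1/2) * ‖A ν - b‖^2 + α * ((∑ i, |w i|) - S) := by
    intro w; have := hmin w; linarith
  -- feasibility
  have feas : ∀ i, |ContinuousLinearMap.adjoint A r₀ i| ≤ α := by
    intro i
    set e : EuclideanSpace ℝ (Fin n) := EuclideanSpace.single i (1:ℝ) with he
    have hci : ContinuousLinearMap.adjoint A r₀ i = ⟪r₀, A e⟫ := by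
      rw [← ContinuousLinearMap.adjoint_inner_left, he, EuclideanSpace.inner_single_right]
      simp
    have hq : ∀ t : ℝ, t * (ContinuousLinearMap.adjoint A r₀ i)
        ≤ α * |t| + t^2 * ((1/2) * ‖A e‖^2) := by
      intro t
      have hk := key (ν + t • e)
      have hA : A (ν + t • e) - b = (A ν - b) + t • A e := by
        simp only [map_add, map_smul]; abel
      have hnorm : ‖A (ν + t • e) - b‖^2
          = ‖A ν - b‖^2 + 2 * (t * ⟪A ν - b, A e⟫) + t^2 * ‖A e‖^2 := by
        rw [hA, norm_add_sq_real, real_inner_smul_right, norm_smul]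
        simp [mul_pow, sq_abs]
      have hsum : ∑ j, |(ν + t • e) j| ≤ S + |t| := by
        have hb2 : ∀ j ∈ Finset.univ, |(ν + t • e) j| ≤ |ν j| + |t| * |e j| := by
          intro j _
          have hj : (ν + t • e) j = ν j + t * e j := rfl
          rw [hj]
          calc |ν j + t * e j| ≤ |ν j| + |t * e j| := abs_add_le _ _
          _ = |ν j| + |t| * |e j| := by rw [abs_mul]
        have hone : ∑ j, |e j| = 1 := by
          simp [he, EuclideanSpace.single_apply, apply_ite abs]
        calc ∑ j, |(ν + t • e) j| ≤ ∑ j, (|ν j| + |t| * |e j|) := Finset.sum_le_sum hb2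
        _ = S + |t| * ∑ j, |e j| := by rw [Finset.sum_add_distrib, ← Finset.mul_sum, hS]
        _ = S + |t| := by rw [hone, mul_one]
      have hinner : ⟪A ν - b, A e⟫ = -(ContinuousLinearMap.adjoint A r₀ i) := by
        rw [hci]
        have hneg : A ν - b = -r₀ := by rw [hr₀]; abel
        rw [hneg, inner_neg_left]
      rw [hinner] at hnorm
      have hsum' : α * (∑ j, |(ν + t • e) j|) ≤ α * (S + |t|) :=
        mul_le_mul_of_nonneg_left hsum hα.le
      nlinarith [hk, hnorm, hsum']
    set c : ℝ := ContinuousLinearMap.adjoint A r₀ i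
    set K : ℝ := (1/2) * ‖A e‖^2 with hK
    have hK0 : 0 ≤ K := by positivity
    have hu : c - α ≤ 0 := by
      apply aux_le _ K
      intro s hs0 hs1
      have := hq s
      rw [abs_of_pos hs0] at this
      nlinarith
    have hl : -c - α ≤ 0 := by
      apply aux_le _ K
      intro s hs0 hs1
      have := hq (-s)
      rw [abs_neg, abs_of_pos hs0] at this
      nlinarith
    exact abs_le.mpr ⟨by linarith, by linarith⟩
  -- complementary slackness
  have slack : ⟪r₀, A ν⟫ = α * S := by
    set β : ℝ := ⟪A ν - b, A ν⟫ + α * S with hβ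
    set K : ℝ := (1/2) * ‖A ν‖^2 with hK
    clear_value β K
    have hq2 : ∀ t : ℝ, -1 < t → 0 ≤ t * β + t^2 * K := by
      intro t ht
      have hk := key ((1 + t) • ν)
      have hA : A ((1 + t) • ν) - b = (A ν - b) + t • A ν := by
        simp only [map_smul]
        rw [add_smul, one_smul]; abel
      have hnorm : ‖A ((1 + t) • ν) - b‖^2
          = ‖A ν - b‖^2 + 2 * (t * ⟪A ν - b, A ν⟫) + t^2 * ‖A ν‖^2 := by
        rw [hA, norm_add_sq_real, real_inner_smul_right, norm_smul]
        simp [mul_pow, sq_abs]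
      have hsum : ∑ j, |((1 + t) • ν) j| = (1 + t) * S := by
        rw [hS, Finset.mul_sum]
        apply Finset.sum_congr rfl
        intro j _
        have hj : ((1 + t) • ν) j = (1 + t) * ν j := rfl
        rw [hj, abs_mul, abs_of_pos (by linarith)]
      rw [hsum, hnorm] at hk
      rw [hβ, hK]
      linarith [hk]
    have h1 : β ≤ 0 := by
      apply aux_le _ K
      intro s hs0 hs1
      have := hq2 (-s) (by linarith)
      nlinarith
    have h2 : -β ≤ 0 := by
      apply aux_le _ K
      intro s hs0 hs1
      have := hq2 s (by linarith)
      nlinarith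
    have hβ0 : β = 0 := le_antisymm h1 (by linarith)
    have hneg : A ν - b = -r₀ := by rw [hr₀]; abel
    rw [hβ, hneg, inner_neg_left] at hβ0
    linarith
  refine ⟨feas, ?_⟩
  intro r hr
  have hb : b = r₀ + A ν := by rw [hr₀]; abel
  have h1 : ⟪r, b⟫ = ⟪r, r₀⟫ + ⟪ContinuousLinearMap.adjoint A r, ν⟫ := by
    conv_lhs => rw [hb]
    rw [inner_add_right, ContinuousLinearMap.adjoint_inner_left]
  have h2 : ⟪ContinuousLinearMap.adjoint A r, ν⟫ ≤ α * S := by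
    rw [PiLp.inner_apply, hS, Finset.mul_sum]
    apply Finset.sum_le_sum
    intro i _
    simp only [RCLike.inner_apply, conj_trivial]
    rw [mul_comm (ν i)]
    calc ContinuousLinearMap.adjoint A r i * ν i
        ≤ |ContinuousLinearMap.adjoint A r i * ν i| := le_abs_self _
      _ = |ContinuousLinearMap.adjoint A r i| * |ν i| := abs_mul _ _
      _ ≤ α * |ν i| := mul_le_mul_of_nonneg_right (hr i) (abs_nonneg _)
  have h3 : ⟪r₀, b⟫ = ‖r₀‖^2 + α * S := by
    conv_lhs => rw [hb]
    rw [inner_add_right, real_inner_self_eq_norm_sq, slack]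
  have h4 : ‖r - r₀‖^2 = ‖r‖^2 - 2 * ⟪r, r₀⟫ + ‖r₀‖^2 := norm_sub_sq_real r r₀
  have h5 : (0:ℝ) ≤ ‖r - r₀‖^2 := by positivity
  linarith
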